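/- Let C be a (2,M,q) code satisfying conditions (I) and (II), and suppose C₁, C₂ ⊆ C with |C₁| = 2, |C₂| = 3, C₁ ≠ C₂, and desc(C₁) = desc(C₂). Then there exist distinct a₁, a₂ ∈ Q and distinct b₁, b₂ ∈ Q such that C₁ = {(a₁,b₁),(a₂,b₂)} and C₂ = {(a₁,b₁),(a₂,b₂),(a₁,b₂)} (up to relabeling); in particular C₁ ⊆ C₂ and so C₁ ∩ C₂ ≠ ∅. -/
import Mathlib


/-- The descendant code of a sub-code of a code of length 2, viewed as a set of pairs. -/
def desc2 {q : ℕ} (C' : Finset (Fin q × Fin q)) : Set (Fin q × Fin q) :=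
  {x | (∃ c ∈ C', c.1 = x.1) ∧ (∃ c ∈ C', c.2 = x.2)}

/-- `C` is a `t`-MIPPC of length 2: for every descendant set produced by some nonempty
sub-code of size at most `t`, all such parent sets have a common codeword. -/
def isMIPPC2 {q : ℕ} (t : ℕ) (C : Finset (Fin q × Fin q)) : Prop :=
  ∀ S : Set (Fin q × Fin q),
    (∃ C' : Finset (Fin q × Fin q), C' ⊆ C ∧ C'.Nonempty ∧ C'.card ≤ t ∧ desc2 C' = S) →
    ∃ c, ∀ C' : Finset (Fin q × Fin q),
      C' ⊆ C → C'.Nonempty → C'.card ≤ t → desc2 C' = S → c ∈ C'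

/-- `A¹_a = {b : (a,b) ∈ C}`. -/
def A1 {q : ℕ} (C : Finset (Fin q × Fin q)) (a : Fin q) : Finset (Fin q) :=
  (C.filter (fun c => c.1 = a)).image Prod.snd

/-- Condition (I). -/
def CondI {q : ℕ} (C : Finset (Fin q × Fin q)) : Prop :=
  ∀ a₁ a₂ : Fin q, a₁ ≠ a₂ → (A1 C a₁ ∩ A1 C a₂).card ≤ 1

/-- Condition (II). -/
def CondII {q : ℕ} (C : Finset (Fin q × Fin q)) : Prop :=
  ¬ ∃ a₁ a₂ a₃ b₁ b₂ b₃ : Fin q,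
      a₁ ≠ a₂ ∧ a₁ ≠ a₃ ∧ a₂ ≠ a₃ ∧ b₁ ≠ b₂ ∧ b₁ ≠ b₃ ∧ b₂ ≠ b₃ ∧
      b₁ ∈ A1 C a₁ ∧ b₂ ∈ A1 C a₁ ∧ b₂ ∈ A1 C a₂ ∧ b₃ ∈ A1 C a₂ ∧
      b₁ ∈ A1 C a₃ ∧ b₃ ∈ A1 C a₃

lemma mem_A1 {q : ℕ} {C : Finset (Fin q × Fin q)} {a b : Fin q} :
    b ∈ A1 C a ↔ (a, b) ∈ C := by
  simp only [A1, Finset.mem_image, Finset.mem_filter]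
  constructor
  · rintro ⟨⟨c1, c2⟩, ⟨hc, rfl⟩, rfl⟩; exact hc
  · intro h; exact ⟨(a, b), ⟨h, rfl⟩, rfl⟩

lemma four_corner {q : ℕ} {C : Finset (Fin q × Fin q)} (hI : CondI C)
    {a₁ a₂ b₁ b₂ : Fin q} (ha : a₁ ≠ a₂) (hb : b₁ ≠ b₂)
    (h11 : (a₁, b₁) ∈ C) (h12 : (a₁, b₂) ∈ C)
    (h21 : (a₂, b₁) ∈ C) (h22 : (a₂, b₂) ∈ C) : False := by
  have hsub : ({b₁, b₂} : Finset (Fin q)) ⊆ A1 C a₁ ∩ A1 C a₂ := by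
    intro b hb'
    simp only [Finset.mem_insert, Finset.mem_singleton] at hb'
    rcases hb' with rfl | rfl <;>
      simp [Finset.mem_inter, mem_A1, h11, h12, h21, h22]
  have h2 : 2 ≤ (A1 C a₁ ∩ A1 C a₂).card :=
    (Finset.card_pair hb) ▸ Finset.card_le_card hsub
  have := hI a₁ a₂ ha
  omega

lemma erase_corner {q : ℕ} {a₁ a₂ b₁ b₂ : Fin q} (ha : a₁ ≠ a₂) (hb : b₁ ≠ b₂) :
    ({(a₁, b₁), (a₁, b₂), (a₂, b₁), (a₂, b₂)} : Finset (Fin q × Fin q)).erase (a₂, b₁)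
      = ({(a₁, b₁), (a₂, b₂)} : Finset (Fin q × Fin q)) ∪ {(a₁, b₂)} := by
  ext ⟨c1, c2⟩
  simp only [Finset.mem_erase, Finset.mem_insert, Finset.mem_singleton,
    Finset.mem_union, Prod.mk.injEq, ne_eq]
  constructor
  · rintro ⟨hne', h⟩
    rcases h with ⟨rfl, rfl⟩ | ⟨rfl, rfl⟩ | ⟨rfl, rfl⟩ | ⟨rfl, rfl⟩
    · tauto
    · tauto
    · exact absurd ⟨rfl, rfl⟩ hne'
    · tauto
  · rintro (⟨rfl, rfl⟩ | ⟨rfl, rfl⟩ | ⟨rfl, rfl⟩)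
    all_goals exact ⟨by rintro ⟨h1, h2⟩; subst_vars; simp_all, by tauto⟩

lemma corner_comm {q : ℕ} (a₁ a₂ b₁ b₂ : Fin q) :
    ({(a₁, b₁), (a₁, b₂), (a₂, b₁), (a₂, b₂)} : Finset (Fin q × Fin q))
      = ({(a₂, b₂), (a₂, b₁), (a₁, b₂), (a₁, b₁)} : Finset (Fin q × Fin q)) := by
  ext c
  simp only [Finset.mem_insert, Finset.mem_singleton]
  tauto

/-- Under conditions (I) and (II), if `C₁ ⊆ C` has size 2, `C₂ ⊆ C` has size 3 and
`desc(C₁) = desc(C₂)`, then (up to relabeling) `C₁ = {(a₁,b₁),(a₂,b₂)}` and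
`C₂ = C₁ ∪ {(a₁,b₂)}`; in particular `C₁ ⊆ C₂`. -/
theorem typeI_of_card_two_three {q : ℕ} (C : Finset (Fin q × Fin q))
    (hI : CondI C) (hII : CondII C)
    (C₁ C₂ : Finset (Fin q × Fin q)) (h₁ : C₁ ⊆ C) (h₂ : C₂ ⊆ C)
    (hc₁ : C₁.card = 2) (hc₂ : C₂.card = 3) (hne : C₁ ≠ C₂)
    (hdesc : desc2 C₁ = desc2 C₂) :
    (∃ a₁ a₂ b₁ b₂ : Fin q, a₁ ≠ a₂ ∧ b₁ ≠ b₂ ∧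
      C₁ = {(a₁, b₁), (a₂, b₂)} ∧ C₂ = C₁ ∪ {(a₁, b₂)}) ∧
    C₁ ⊆ C₂ ∧ (C₁ ∩ C₂).Nonempty := by
  obtain ⟨x, y, hxy, hC₁⟩ := Finset.card_eq_two.mp hc₁
  obtain ⟨a₁, b₁⟩ := x
  obtain ⟨a₂, b₂⟩ := y
  have hmem₂ : ∀ c ∈ C₂, (c.1 = a₁ ∨ c.1 = a₂) ∧ (c.2 = b₁ ∨ c.2 = b₂) := by
    intro c hc
    have hc' : c ∈ desc2 C₁ := by
      rw [hdesc]; exact ⟨⟨c, hc, rfl⟩, ⟨c, hc, rfl⟩⟩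
    simp only [desc2, hC₁, Set.mem_setOf_eq, Finset.mem_insert,
      Finset.mem_singleton] at hc'
    obtain ⟨h1, h2⟩ := hc'
    constructor
    · obtain ⟨c', hc', h⟩ := h1
      rcases hc' with rfl | rfl
      · exact Or.inl h.symm
      · exact Or.inr h.symm
    · obtain ⟨c', hc', h⟩ := h2
      rcases hc' with rfl | rfl
      · exact Or.inl h.symm
      · exact Or.inr h.symm
  have ha : a₁ ≠ a₂ := by
    intro h; subst h
    have hsub : C₂ ⊆ ({(a₁, b₁), (a₁, b₂)} : Finset (Fin q × Fin q)) := by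
      intro c hc
      obtain ⟨h1, h2⟩ := hmem₂ c hc
      obtain ⟨c1, c2⟩ := c
      simp only at h1 h2
      simp only [Finset.mem_insert, Finset.mem_singleton, Prod.mk.injEq]
      rcases h1 with rfl | rfl <;> rcases h2 with rfl | rfl <;> tauto
    have := Finset.card_le_card hsub
    have h22 : ({(a₁, b₁), (a₁, b₂)} : Finset (Fin q × Fin q)).card ≤ 2 :=
      Finset.card_insert_le _ _ |>.trans (by simp)
    omega
  have hb : b₁ ≠ b₂ := by
    intro h; subst h
    have hsub : C₂ ⊆ ({(a₁, b₁), (a₂, b₁)} : Finset (Fin q × Fin q)) := by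
      intro c hc
      obtain ⟨h1, h2⟩ := hmem₂ c hc
      obtain ⟨c1, c2⟩ := c
      simp only at h1 h2
      simp only [Finset.mem_insert, Finset.mem_singleton, Prod.mk.injEq]
      rcases h1 with rfl | rfl <;> rcases h2 with rfl | rfl <;> tauto
    have := Finset.card_le_card hsub
    have h22 : ({(a₁, b₁), (a₂, b₁)} : Finset (Fin q × Fin q)).card ≤ 2 :=
      Finset.card_insert_le _ _ |>.trans (by simp)
    omega
  set S : Finset (Fin q × Fin q) := {(a₁, b₁), (a₁, b₂), (a₂, b₁), (a₂, b₂)} with hS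
  have hsubS : C₂ ⊆ S := by
    intro c hc
    obtain ⟨h1, h2⟩ := hmem₂ c hc
    obtain ⟨c1, c2⟩ := c
    simp only at h1 h2
    simp only [hS, Finset.mem_insert, Finset.mem_singleton, Prod.mk.injEq]
    rcases h1 with rfl | rfl <;> rcases h2 with rfl | rfl <;> tauto
  have hScard : S.card = 4 := by
    simp only [hS]
    rw [Finset.card_insert_of_notMem, Finset.card_insert_of_notMem,
      Finset.card_insert_of_notMem, Finset.card_singleton]
    · simp [Prod.ext_iff, ha, hb, Ne.symm ha, Ne.symm hb]
    · simp [Prod.ext_iff, ha, hb, Ne.symm ha, Ne.symm hb]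
    · simp [Prod.ext_iff, ha, hb, Ne.symm ha, Ne.symm hb]
  have hdiff : (S \ C₂).Nonempty := by
    rw [← Finset.card_pos, Finset.card_sdiff_of_subset hsubS]; omega
  obtain ⟨z, hz⟩ := hdiff
  rw [Finset.mem_sdiff] at hz
  obtain ⟨hzS, hzC₂⟩ := hz
  have hsubE : C₂ ⊆ S.erase z := fun c hc =>
    Finset.mem_erase.mpr ⟨fun h => hzC₂ (h ▸ hc), hsubS hc⟩
  have hC₂eq : C₂ = S.erase z := by
    apply Finset.eq_of_subset_of_card_le hsubE
    rw [Finset.card_erase_of_mem hzS]; omega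
  have hx : (a₁, b₁) ∈ C := h₁ (by simp [hC₁])
  have hy : (a₂, b₂) ∈ C := h₁ (by simp [hC₁])
  have hzS' : z = (a₁, b₁) ∨ z = (a₁, b₂) ∨ z = (a₂, b₁) ∨ z = (a₂, b₂) := by
    simpa [hS] using hzS
  have memE : ∀ w ∈ S, w ≠ z → w ∈ C₂ := by
    intro w hw hwz
    rw [hC₂eq]; exact Finset.mem_erase.mpr ⟨hwz, hw⟩
  have m11 : (a₁, b₁) ∈ S := by simp [hS]
  have m12 : (a₁, b₂) ∈ S := by simp [hS]
  have m21 : (a₂, b₁) ∈ S := by simp [hS]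
  have m22 : (a₂, b₂) ∈ S := by simp [hS]
  have finish : ∀ (hgood : C₂ = C₁ ∪ {(a₁, b₂)} ∨ C₂ = C₁ ∪ {(a₂, b₁)}),
      (∃ a₁' a₂' b₁' b₂' : Fin q, a₁' ≠ a₂' ∧ b₁' ≠ b₂' ∧
        C₁ = {(a₁', b₁'), (a₂', b₂')} ∧ C₂ = C₁ ∪ {(a₁', b₂')}) ∧
      C₁ ⊆ C₂ ∧ (C₁ ∩ C₂).Nonempty := by
    intro hgood
    have hsub12 : C₁ ⊆ C₂ := by
      rcases hgood with h | h <;> rw [h] <;> exact Finset.subset_union_left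
    refine ⟨?_, hsub12, ⟨(a₁, b₁), Finset.mem_inter.mpr
      ⟨by simp [hC₁], hsub12 (by simp [hC₁])⟩⟩⟩
    rcases hgood with h | h
    · exact ⟨a₁, a₂, b₁, b₂, ha, hb, hC₁, h⟩
    · refine ⟨a₂, a₁, b₂, b₁, Ne.symm ha, Ne.symm hb, ?_, ?_⟩
      · rw [hC₁, Finset.pair_comm]
      · exact h
  rcases hzS' with rfl | rfl | rfl | rfl
  · -- z = (a₁,b₁): contradiction with CondI
    exact (four_corner hI ha hb hx
      (h₂ (memE _ m12 (by simp [Prod.ext_iff, Ne.symm hb])))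
      (h₂ (memE _ m21 (by simp [Prod.ext_iff, Ne.symm ha]))) hy).elim
  · -- z = (a₁,b₂): C₂ = C₁ ∪ {(a₂,b₁)}
    apply finish; right
    have hC₁' : C₁ = {(a₂, b₂), (a₁, b₁)} := by rw [hC₁, Finset.pair_comm]
    calc C₂ = S.erase (a₁, b₂) := hC₂eq
      _ = ({(a₂, b₂), (a₁, b₁)} : Finset (Fin q × Fin q)) ∪ {(a₂, b₁)} := by
          rw [hS, corner_comm]; exact erase_corner (Ne.symm ha) (Ne.symm hb)
      _ = C₁ ∪ {(a₂, b₁)} := by rw [hC₁']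
  · -- z = (a₂,b₁): C₂ = C₁ ∪ {(a₁,b₂)}
    apply finish; left
    rw [hC₂eq, hS, hC₁]
    exact erase_corner ha hb
  · -- z = (a₂,b₂): contradiction with CondI
    exact (four_corner hI ha hb hx
      (h₂ (memE _ m12 (by simp [Prod.ext_iff, ha])))
      (h₂ (memE _ m21 (by simp [Prod.ext_iff, hb]))) hy).elim
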